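/- arXiv:1701.01999 — 3 statements merged into one kernel-verified Lean document; each statement's English description precedes it below -/
import Mathlib

section
/- The Toffoli gate on three qubits decomposes into five two-qubit gates: CV(1,3) · CNOT(1,2) · CV†(2,3) · CNOT(1,2) · CV(2,3) = TOF as 8×8 complex matrices (matrix product written with the last-applied gate on the left). -/
open Complex Matrix Kronecker

noncomputable def V : Matrix (Fin 2) (Fin 2) ℂ :=
  !![(1 + I)/2, (1 - I)/2; (1 - I)/2, (1 + I)/2]

noncomputable def X : Matrix (Fin 2) (Fin 2) ℂ := !![0, 1; 1, 0]

noncomputable def I₂ : Matrix (Fin 2) (Fin 2) ℂ := 1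

noncomputable def P₀ : Matrix (Fin 2) (Fin 2) ℂ := !![1, 0; 0, 0]

noncomputable def P₁ : Matrix (Fin 2) (Fin 2) ℂ := !![0, 0; 0, 1]

/-- CV(1,3): apply V to qubit 3 when qubit 1 is 1. -/
noncomputable def CV13 := P₀ ⊗ₖ I₂ ⊗ₖ I₂ + P₁ ⊗ₖ I₂ ⊗ₖ V

/-- CV(2,3): apply V to qubit 3 when qubit 2 is 1. -/
noncomputable def CV23 := I₂ ⊗ₖ P₀ ⊗ₖ I₂ + I₂ ⊗ₖ P₁ ⊗ₖ V

/-- CV†(2,3): apply V† to qubit 3 when qubit 2 is 1. -/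
noncomputable def CVd23 := I₂ ⊗ₖ P₀ ⊗ₖ I₂ + I₂ ⊗ₖ P₁ ⊗ₖ Vᴴ

/-- CNOT(1,2): flip qubit 2 when qubit 1 is 1. -/
noncomputable def CNOT12 := P₀ ⊗ₖ I₂ ⊗ₖ I₂ + P₁ ⊗ₖ X ⊗ₖ I₂

/-- The Toffoli gate: |a,b,c⟩ ↦ |a,b,(a AND b) XOR c⟩. -/
noncomputable def TOF := P₀ ⊗ₖ I₂ ⊗ₖ I₂ + P₁ ⊗ₖ P₀ ⊗ₖ I₂ + P₁ ⊗ₖ P₁ ⊗ₖ X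


lemma hP00 : P₀ * P₀ = P₀ := by
  ext i j; fin_cases i <;> fin_cases j <;>
    simp [P₀, Matrix.mul_apply, Fin.sum_univ_succ]

lemma hP01 : P₀ * P₁ = 0 := by
  ext i j; fin_cases i <;> fin_cases j <;>
    simp [P₀, P₁, Matrix.mul_apply, Fin.sum_univ_succ]

lemma hP10 : P₁ * P₀ = 0 := by
  ext i j; fin_cases i <;> fin_cases j <;>
    simp [P₀, P₁, Matrix.mul_apply, Fin.sum_univ_succ]

lemma hP11 : P₁ * P₁ = P₁ := by
  ext i j; fin_cases i <;> fin_cases j <;>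
    simp [P₁, Matrix.mul_apply, Fin.sum_univ_succ]

lemma hXP0X : X * P₀ * X = P₁ := by
  ext i j; fin_cases i <;> fin_cases j <;>
    simp [X, P₀, P₁, Matrix.mul_apply, Fin.sum_univ_succ]

lemma hXP1X : X * P₁ * X = P₀ := by
  ext i j; fin_cases i <;> fin_cases j <;>
    simp [X, P₀, P₁, Matrix.mul_apply, Fin.sum_univ_succ]

lemma hVVd : V * Vᴴ = 1 := by
  ext i j; fin_cases i <;> fin_cases j <;>
    simp [V, Matrix.mul_apply, Fin.sum_univ_succ, Matrix.conjTranspose_apply,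
      Matrix.one_apply, Complex.ext_iff] <;> ring_nf <;> norm_num

lemma hVdV : Vᴴ * V = 1 := by
  ext i j; fin_cases i <;> fin_cases j <;>
    simp [V, Matrix.mul_apply, Fin.sum_univ_succ, Matrix.conjTranspose_apply,
      Matrix.one_apply, Complex.ext_iff] <;> ring_nf <;> norm_num

lemma hVV : V * V = X := by
  ext i j; fin_cases i <;> fin_cases j <;>
    simp [V, X, Matrix.mul_apply, Fin.sum_univ_succ, Complex.ext_iff] <;>
    ring_nf <;> norm_num

/-- The five two-qubit gate decomposition of the Toffoli gate. -/
theorem toffoli_five_gate_decomposition :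
    CV13 * CNOT12 * CVd23 * CNOT12 * CV23 = TOF := by
  unfold CV13 CNOT12 CVd23 CV23 TOF I₂
  simp only [Matrix.add_mul, Matrix.mul_add, ← Matrix.mul_kronecker_mul,
    Matrix.one_mul, Matrix.mul_one, hP00, hP01, hP10, hP11, hXP0X, hXP1X,
    hVVd, hVdV, hVV, Matrix.zero_kronecker, Matrix.kronecker_zero,
    add_zero, zero_add]
  have hsum : P₀ + P₁ = (1 : Matrix (Fin 2) (Fin 2) ℂ) := by
    ext i j; fin_cases i <;> fin_cases j <;> simp [P₀, P₁, Matrix.one_apply]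
  have key : P₀ ⊗ₖ (1 : Matrix (Fin 2) (Fin 2) ℂ) ⊗ₖ (1 : Matrix (Fin 2) (Fin 2) ℂ)
      = P₀ ⊗ₖ P₀ ⊗ₖ 1 + P₀ ⊗ₖ P₁ ⊗ₖ 1 := by
    rw [← Matrix.add_kronecker, ← Matrix.kronecker_add, hsum]
  rw [key]
  abel
end

section
/- Toffoli gate decomposition: for every n > 2, a Toffoli gate with n control bits can be decomposed into 2^(n-2)+1 Toffoli gates with 2 control bits using n-2 ancilla bits. Precisely: there exists a list of exactly 2^(n-2)+1 two-control Toffoli gate functions on states s : Fin (2n-1) → Bool (each gate picks three distinct coordinates i, j, k and replaces s k by s k XOR (s i AND s j), leaving all other coordinates unchanged) such that, for every state s whose n-2 ancilla coordinates are all false, the composition of the gates produces a state whose target coordinate equals (s target) XOR (the AND of the n control coordinates of s) and whose n control coordinates are unchanged. -/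
/-- The two-control Toffoli gate on distinct wires `i`, `j` (controls) and `k`
(target): coordinate `k` is updated to `s k XOR (s i AND s j)`. -/
def toffoli2 {w : ℕ} (i j k : Fin w) (s : Fin w → Bool) : Fin w → Bool :=
  Function.update s k (xor (s k) (s i && s j))

namespace ToffoliAux

variable {w : ℕ}

lemma toffoli2_ne (i j k x : Fin w) (hx : x ≠ k) (s : Fin w → Bool) :
    toffoli2 i j k s x = s x := Function.update_of_ne hx _ _

lemma toffoli2_self (i j k : Fin w) (s : Fin w → Bool) :
    toffoli2 i j k s k = xor (s k) (s i && s j) := Function.update_self _ _ _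

lemma toffoli2_invol (i j k : Fin w) (hik : i ≠ k) (hjk : j ≠ k) (s : Fin w → Bool) :
    toffoli2 i j k (toffoli2 i j k s) = s := by
  funext x
  by_cases hx : x = k
  · subst hx
    rw [toffoli2_self, toffoli2_self, toffoli2_ne _ _ _ _ hik, toffoli2_ne _ _ _ _ hjk,
      Bool.xor_assoc, Bool.xor_self, Bool.xor_false]
  · rw [toffoli2_ne _ _ _ _ hx, toffoli2_ne _ _ _ _ hx]

lemma toffoli2_update (i j k t : Fin w) (hit : i ≠ t) (hjt : j ≠ t) (hkt : k ≠ t)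
    (s : Fin w → Bool) (b : Bool) :
    toffoli2 i j k (Function.update s t b) = Function.update (toffoli2 i j k s) t b := by
  have htk : (t : Fin w) ≠ k := fun h => hkt h.symm
  funext x
  by_cases hx : x = t
  · subst hx
    rw [toffoli2_ne _ _ _ _ htk, Function.update_self, Function.update_self]
  · rw [Function.update_of_ne hx]
    by_cases hk : x = k
    · subst hk
      rw [toffoli2_self, toffoli2_self, Function.update_of_ne hx,
        Function.update_of_ne hit, Function.update_of_ne hjt]
    · rw [toffoli2_ne _ _ _ _ hk, toffoli2_ne _ _ _ _ hk, Function.update_of_ne hx]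

lemma foldl_coord (L : List ((Fin w → Bool) → (Fin w → Bool))) (x : Fin w)
    (h : ∀ g ∈ L, ∀ s, g s x = s x) :
    ∀ s, L.foldl (fun st g => g st) s x = s x := by
  induction L with
  | nil => intro s; rfl
  | cons g L ih =>
    intro s
    simp only [List.foldl_cons]
    rw [ih (fun g' hg' => h g' (List.mem_cons_of_mem _ hg')), h g (List.mem_cons_self)]

lemma foldl_update (L : List ((Fin w → Bool) → (Fin w → Bool))) (t : Fin w) (b : Bool)
    (h : ∀ g ∈ L, ∀ s b', g (Function.update s t b') = Function.update (g s) t b') :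
    ∀ s, L.foldl (fun st g => g st) (Function.update s t b) =
      Function.update (L.foldl (fun st g => g st) s) t b := by
  induction L with
  | nil => intro s; rfl
  | cons g L ih =>
    intro s
    simp only [List.foldl_cons]
    rw [h g (List.mem_cons_self), ih (fun g' hg' => h g' (List.mem_cons.mpr (Or.inr hg')))]

lemma foldl_rev_cancel (L : List ((Fin w → Bool) → (Fin w → Bool)))
    (h : ∀ g ∈ L, ∀ s, g (g s) = s) :
    ∀ s, L.reverse.foldl (fun st g => g st) (L.foldl (fun st g => g st) s) = s := by
  induction L with
  | nil => intro s; rfl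
  | cons g L ih =>
    intro s
    simp only [List.reverse_cons, List.foldl_cons, List.foldl_append, List.foldl_nil]
    rw [ih (fun g' hg' => h g' (List.mem_cons.mpr (Or.inr hg'))) (g s),
      h g (List.mem_cons_self)]

lemma foldl_replicate_invol (g : (Fin w → Bool) → (Fin w → Bool))
    (h : ∀ s, g (g s) = s) :
    ∀ q s, (List.replicate (2 * q) g).foldl (fun st g => g st) s = s := by
  intro q
  induction q with
  | zero => intro s; rfl
  | succ q ih =>
    intro s
    have : 2 * (q + 1) = (2 * q) + 1 + 1 := by omega
    rw [this, List.replicate_succ, List.replicate_succ]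
    simp only [List.foldl_cons]
    rw [h s, ih s]

/-- ancilla wire: `Aw n hn 0` is control wire `0`; `Aw n hn k` for `1 ≤ k ≤ n-2`
is ancilla wire `n + k`. -/
def Aw (n : ℕ) (hn : 2 < n) (k : ℕ) : Fin (2 * n - 1) :=
  if k = 0 then ⟨0, by omega⟩
  else ⟨n + min k (n - 2), by have := Nat.min_le_right k (n - 2); omega⟩

/-- control wire `k` (for `k ≤ n-1`). -/
def Cw (n : ℕ) (hn : 2 < n) (k : ℕ) : Fin (2 * n - 1) :=
  ⟨min k (n - 1), by have := Nat.min_le_right k (n - 1); omega⟩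

lemma Aw_zero (n : ℕ) (hn : 2 < n) : (Aw n hn 0).val = 0 := by simp [Aw]

lemma Aw_val (n : ℕ) (hn : 2 < n) (k : ℕ) (hk1 : 1 ≤ k) (hk2 : k ≤ n - 2) :
    (Aw n hn k).val = n + k := by
  rw [Aw, if_neg (by omega)]
  simp [Nat.min_eq_left hk2]

lemma Cw_val (n : ℕ) (hn : 2 < n) (k : ℕ) (hk : k ≤ n - 1) :
    (Cw n hn k).val = k := by simp [Cw, Nat.min_eq_left hk]

/-- `k`-th computation gate (`1 ≤ k ≤ n-2`): ancilla `k` gets the AND of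
ancilla `k-1` (or control `0`) and control `k`. -/
def Gk (n : ℕ) (hn : 2 < n) (k : ℕ) :
    (Fin (2 * n - 1) → Bool) → (Fin (2 * n - 1) → Bool) :=
  toffoli2 (Aw n hn (k - 1)) (Cw n hn k) (Aw n hn k)

def compL (n : ℕ) (hn : 2 < n) (m : ℕ) :
    List ((Fin (2 * n - 1) → Bool) → (Fin (2 * n - 1) → Bool)) :=
  (List.range' 1 m).map (Gk n hn)

lemma Gk_wires (n : ℕ) (hn : 2 < n) (k : ℕ) (hk1 : 1 ≤ k) (hk2 : k ≤ n - 2) :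
    (Aw n hn (k - 1)).val ≠ (Cw n hn k).val ∧
    (Aw n hn (k - 1)).val ≠ (Aw n hn k).val ∧
    (Cw n hn k).val ≠ (Aw n hn k).val ∧
    (Aw n hn (k - 1)).val ≠ n ∧ (Cw n hn k).val ≠ n ∧ (Aw n hn k).val = n + k := by
  have hAk : (Aw n hn k).val = n + k := Aw_val n hn k hk1 hk2
  have hCk : (Cw n hn k).val = k := Cw_val n hn k (by omega)
  rcases Nat.eq_or_lt_of_le hk1 with h1 | h1
  · have hA0 : (Aw n hn (k - 1)).val = 0 := by rw [show k - 1 = 0 by omega]; exact Aw_zero n hn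
    refine ⟨?_, ?_, ?_, ?_, ?_, hAk⟩ <;> omega
  · have hA0 : (Aw n hn (k - 1)).val = n + (k - 1) := Aw_val n hn (k - 1) (by omega) (by omega)
    refine ⟨?_, ?_, ?_, ?_, ?_, hAk⟩ <;> omega

lemma compute_spec (n : ℕ) (hn : 2 < n) (s : Fin (2 * n - 1) → Bool)
    (hanc : ∀ a : Fin (2 * n - 1), n < a.val → s a = false) :
    ∀ m, m ≤ n - 2 →
      (∀ x : Fin (2 * n - 1), x.val ≤ n ∨ n + m < x.val →
        (compL n hn m).foldl (fun st g => g st) s x = s x) ∧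
      (compL n hn m).foldl (fun st g => g st) s (Aw n hn m)
        = decide (∀ i ≤ m, s (Cw n hn i) = true) := by
  intro m
  induction m with
  | zero =>
    intro _
    constructor
    · intro x _; rfl
    · have h0 : Aw n hn 0 = Cw n hn 0 := by
        apply Fin.ext; rw [Aw_zero, Cw_val n hn 0 (by omega)]
      have hiff : (∀ i ≤ 0, s (Cw n hn i) = true) ↔ s (Cw n hn 0) = true := by
        constructor
        · exact fun h => h 0 le_rfl
        · intro h i hi
          rw [Nat.le_zero.mp hi]; exact h
      simp only [compL, List.range'_zero, List.map_nil, List.foldl_nil, h0,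
        decide_eq_decide.mpr hiff, Bool.decide_coe]
  | succ m ih =>
    intro hm
    obtain ⟨ih1, ih2⟩ := ih (by omega)
    have hsplit : compL n hn (m + 1) = compL n hn m ++ [Gk n hn (m + 1)] := by
      unfold compL
      rw [List.range'_concat]
      simp [Nat.add_comm]
    have hAval : (Aw n hn (m + 1)).val = n + (m + 1) := Aw_val n hn _ (by omega) hm
    have hCval : (Cw n hn (m + 1)).val = m + 1 := Cw_val n hn _ (by omega)
    have hGk : Gk n hn (m + 1)
        = toffoli2 (Aw n hn m) (Cw n hn (m + 1)) (Aw n hn (m + 1)) := by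
      unfold Gk; rw [Nat.add_sub_cancel]
    rw [hsplit]
    simp only [List.foldl_append, List.foldl_cons, List.foldl_nil, hGk]
    set u := (compL n hn m).foldl (fun st g => g st) s with hu
    constructor
    · intro x hx
      rw [toffoli2_ne _ _ _ _ (fun h => by rw [h] at hx; omega)]
      exact ih1 x (by omega)
    · rw [toffoli2_self]
      have h1 : u (Aw n hn (m + 1)) = false := by
        rw [ih1 _ (by omega)]
        exact hanc _ (by omega)
      have h2 : u (Cw n hn (m + 1)) = s (Cw n hn (m + 1)) := ih1 _ (by omega)
      rw [h1, h2, ih2, Bool.false_xor]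
      have hiff : (∀ i ≤ m + 1, s (Cw n hn i) = true) ↔
          ((∀ i ≤ m, s (Cw n hn i) = true) ∧ s (Cw n hn (m + 1)) = true) := by
        constructor
        · exact fun h => ⟨fun i hi => h i (by omega), h _ le_rfl⟩
        · rintro ⟨ha, hb⟩ i hi
          rcases Nat.eq_or_lt_of_le hi with h | h
          · rw [h]; exact hb
          · exact ha i (by omega)
      rw [decide_eq_decide.mpr hiff, Bool.decide_and, Bool.decide_coe]

end ToffoliAux

open ToffoliAux

/-- Toffoli gate decomposition: for `n > 2`, the `n`-control Toffoli on wires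
`Fin (2n-1)` (controls `0,…,n-1`, target `n`, ancillas `n+1,…,2n-2`) is realized
by a list of exactly `2^(n-2) + 1` two-control Toffoli gates: on every state whose
ancilla coordinates are all `false`, the composition XORs the target with the AND
of all `n` controls and leaves the controls unchanged. -/
theorem toffoli_decomposition (n : ℕ) (hn : 2 < n) :
    ∃ L : List ((Fin (2 * n - 1) → Bool) → (Fin (2 * n - 1) → Bool)),
      L.length = 2 ^ (n - 2) + 1 ∧
      (∀ g ∈ L, ∃ i j k : Fin (2 * n - 1),
        i ≠ j ∧ i ≠ k ∧ j ≠ k ∧ g = toffoli2 i j k) ∧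
      ∀ s : Fin (2 * n - 1) → Bool,
        (∀ a : Fin (2 * n - 1), n < a.val → s a = false) →
        (L.foldl (fun st g => g st) s) ⟨n, by omega⟩ =
          xor (s ⟨n, by omega⟩)
            (decide (∀ c : Fin (2 * n - 1), c.val < n → s c = true)) ∧
        ∀ c : Fin (2 * n - 1), c.val < n →
          (L.foldl (fun st g => g st) s) c = s c := by
  have hNn : n < 2 * n - 1 := by omega
  have h2le : 2 * (n - 2) ≤ 2 ^ (n - 2) := by
    have key : ∀ m : ℕ, 2 * (m + 1) ≤ 2 ^ (m + 1) := by
      intro m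
      induction m with
      | zero => simp
      | succ m ih =>
        have h1 : 1 ≤ 2 ^ (m + 1) := Nat.one_le_two_pow
        have : 2 ^ (m + 1 + 1) = 2 ^ (m + 1) + 2 ^ (m + 1) := by ring
        omega
    have := key (n - 3)
    rwa [show n - 3 + 1 = n - 2 by omega] at this
  obtain ⟨q, hq⟩ : ∃ q, 2 ^ (n - 2) - 2 * (n - 2) = 2 * q := by
    obtain ⟨e, he⟩ : (2 : ℕ) ∣ 2 ^ (n - 2) := dvd_pow_self 2 (by omega)
    exact ⟨e - (n - 2), by omega⟩
  set tn : Fin (2 * n - 1) := ⟨n, hNn⟩ with htn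
  have htnval : tn.val = n := rfl
  set a := Aw n hn (n - 2) with ha
  set c := Cw n hn (n - 1) with hc
  have hAval : a.val = n + (n - 2) := Aw_val n hn _ (by omega) le_rfl
  have hCval : c.val = n - 1 := Cw_val n hn _ le_rfl
  set Tg := toffoli2 a c tn with hTgdef
  have hac : a ≠ c := Fin.ne_of_val_ne (by omega)
  have hatn : a ≠ tn := Fin.ne_of_val_ne (by rw [hAval, htnval]; omega)
  have hctn : c ≠ tn := Fin.ne_of_val_ne (by rw [hCval, htnval]; omega)
  have hmem : ∀ g ∈ compL n hn (n - 2), ∃ k, 1 ≤ k ∧ k ≤ n - 2 ∧ g = Gk n hn k := by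
    intro g hg
    simp only [compL, List.mem_map] at hg
    obtain ⟨k, hk, rfl⟩ := hg
    rw [List.mem_range'_1] at hk
    exact ⟨k, hk.1, by omega, rfl⟩
  have hgates : ∀ g ∈ compL n hn (n - 2), ∃ i j k' : Fin (2 * n - 1),
      i ≠ j ∧ i ≠ k' ∧ j ≠ k' ∧ i ≠ tn ∧ j ≠ tn ∧ k' ≠ tn ∧ g = toffoli2 i j k' := by
    intro g hg
    obtain ⟨k, hk1, hk2, rfl⟩ := hmem g hg
    obtain ⟨w1, w2, w3, w4, w5, w6⟩ := Gk_wires n hn k hk1 hk2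
    exact ⟨_, _, _, Fin.ne_of_val_ne w1, Fin.ne_of_val_ne w2, Fin.ne_of_val_ne w3,
      Fin.ne_of_val_ne (by rw [htnval]; exact w4),
      Fin.ne_of_val_ne (by rw [htnval]; exact w5),
      Fin.ne_of_val_ne (by rw [htnval]; omega), rfl⟩
  refine ⟨compL n hn (n - 2) ++ [Tg] ++ (compL n hn (n - 2)).reverse ++
      List.replicate (2 * q) Tg, ?_, ?_, ?_⟩
  · simp only [List.length_append, List.length_reverse, List.length_replicate,
      List.length_cons, List.length_nil, compL, List.length_map, List.length_range']
    omega
  · intro g hg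
    simp only [List.mem_append, List.mem_reverse, List.mem_singleton,
      List.mem_replicate] at hg
    rcases hg with ((hg | hg) | hg) | hg
    · obtain ⟨i, j, k', d1, d2, d3, _, _, _, hgeq⟩ := hgates g hg
      exact ⟨i, j, k', d1, d2, d3, hgeq⟩
    · exact ⟨a, c, tn, hac, hatn, hctn, hg⟩
    · obtain ⟨i, j, k', d1, d2, d3, _, _, _, hgeq⟩ := hgates g hg
      exact ⟨i, j, k', d1, d2, d3, hgeq⟩
    · exact ⟨a, c, tn, hac, hatn, hctn, hg.2⟩
  · intro s hanc
    obtain ⟨hu1, hu2⟩ := compute_spec n hn s hanc (n - 2) le_rfl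
    set u := (compL n hn (n - 2)).foldl (fun st g => g st) s with hu
    set b := xor (s tn) (decide (∀ i ≤ n - 2, s (Cw n hn i) = true) && s c) with hb
    have hTgu : Tg u = Function.update u tn b := by
      rw [hTgdef]
      unfold toffoli2
      rw [hu1 tn (Or.inl (le_of_eq htnval)), hu1 c (Or.inl (by rw [hCval]; omega)), hu2]
    have hinv : ∀ g ∈ compL n hn (n - 2), ∀ t, g (g t) = t := by
      intro g hg t
      obtain ⟨i, j, k', _, d2, d3, _, _, _, rfl⟩ := hgates g hg
      exact toffoli2_invol i j k' d2 d3 t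
    have hcomm : ∀ g ∈ (compL n hn (n - 2)).reverse, ∀ t b',
        g (Function.update t tn b') = Function.update (g t) tn b' := by
      intro g hg t b'
      rw [List.mem_reverse] at hg
      obtain ⟨i, j, k', _, _, _, e1, e2, e3, rfl⟩ := hgates g hg
      exact toffoli2_update i j k' tn e1 e2 e3 t b'
    have hTginv : ∀ t, Tg (Tg t) = t := fun t => toffoli2_invol a c tn hatn hctn t
    have hfold : (compL n hn (n - 2) ++ [Tg] ++ (compL n hn (n - 2)).reverse ++
        List.replicate (2 * q) Tg).foldl (fun st g => g st) s = Function.update s tn b := by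
      simp only [List.foldl_append, List.foldl_cons, List.foldl_nil, ← hu, hTgu]
      rw [foldl_update _ tn b hcomm u, foldl_rev_cancel _ hinv s,
        foldl_replicate_invol Tg hTginv q]
    rw [hfold]
    have hfin : (∀ ch : Fin (2 * n - 1), ch.val < n → s ch = true) ↔
        ((∀ i ≤ n - 2, s (Cw n hn i) = true) ∧ s c = true) := by
      constructor
      · intro h
        refine ⟨fun i hi => h _ (by rw [Cw_val n hn i (by omega)]; omega), ?_⟩
        exact h _ (by rw [hCval]; omega)
      · rintro ⟨h1, h2⟩ ch hch
        by_cases hc2 : ch.val ≤ n - 2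
        · have hcc : Cw n hn ch.val = ch := Fin.ext (Cw_val n hn _ (by omega))
          rw [← hcc]; exact h1 _ hc2
        · have hcc : ch = c := Fin.ext (by rw [hCval]; omega)
          rw [hcc]; exact h2
    constructor
    · show Function.update s tn b tn = _
      rw [Function.update_self, hb, decide_eq_decide.mpr hfin, Bool.decide_and,
        Bool.decide_coe]
    · intro c' hc'
      exact Function.update_of_ne (Fin.ne_of_val_ne (by rw [htnval]; omega)) _ _
end

section
/- Upper bound on the Reed-Muller Form I: an arbitrary Boolean function expressed in Reed-Muller form as the EXOR of k > 1 product terms T₁, …, T_k (each Tᵢ a set of nᵢ > 2 control variables among n input variables) can be built from at most k + Σᵢ 2^(nᵢ - 2) two-bit-controlled Toffoli gates using ancilla bits. Precisely: there exist a number A of ancilla wires and a list of at most Σᵢ (2^(nᵢ-2) + 1) two-control Toffoli gate functions on states s : Fin (n + 1 + A) → Bool such that, for every state whose ancilla coordinates are all false, the composition leaves the n input coordinates unchanged and replaces the output coordinate y by y XOR (⨁ᵢ ∏_{j ∈ Tᵢ} xⱼ). -/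
lemma toffoli2_apply_ne {w : ℕ} (i j k : Fin w) (s : Fin w → Bool) (x : Fin w)
    (h : x ≠ k) : toffoli2 i j k s x = s x := by
  simp [toffoli2, Function.update_of_ne h]

lemma toffoli2_apply_target {w : ℕ} (i j k : Fin w) (s : Fin w → Bool) :
    toffoli2 i j k s k = xor (s k) (s i && s j) := by
  simp [toffoli2]

lemma foldr_and_init {α} (f : α → Bool) (l : List α) (x y : Bool) :
    l.foldr (fun c b => f c && b) (x && y) = (x && l.foldr (fun c b => f c && b) y) := by
  induction l with
  | nil => rfl
  | cons a t ih => simp [ih, Bool.and_left_comm]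

lemma foldr_and_congr {α} (f g : α → Bool) (l : List α) (x : Bool)
    (h : ∀ c ∈ l, f c = g c) :
    l.foldr (fun c b => f c && b) x = l.foldr (fun c b => g c && b) x := by
  induction l with
  | nil => rfl
  | cons a t ih =>
    simp only [List.foldr_cons]
    rw [h a (by simp), ih (fun c hc => h c (by simp [hc]))]

lemma inf_eq_foldr {α} (T : Finset α) (f : α → Bool) :
    T.toList.foldr (fun c b => f c && b) true = T.inf f := by
  rw [Finset.inf, Finset.fold, ← Finset.coe_toList T, Multiset.map_coe, Multiset.coe_fold_r]
  induction T.toList with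
  | nil => rfl
  | cons a t ih => simp [ih]

lemma chain {w n : ℕ} (cs : List (Fin w)) (acc : Fin w) (base : ℕ)
    (hn : n < base) (hw : base + cs.length ≤ w)
    (hacc : acc.val < base)
    (hcs : ∀ c ∈ cs, c.val < n ∧ c ≠ acc) :
    ∃ (G : List ((Fin w → Bool) → (Fin w → Bool))) (last : Fin w),
      G.length = cs.length ∧
      last.val < base + cs.length ∧
      (cs ≠ [] → base ≤ last.val) ∧ (cs = [] → last = acc) ∧
      (∀ g ∈ G, ∃ i j m : Fin w, i ≠ j ∧ i ≠ m ∧ j ≠ m ∧ g = toffoli2 i j m) ∧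
      ∀ s : Fin w → Bool, (∀ b : Fin w, base ≤ b.val → s b = false) →
        (∀ x : Fin w, x.val < base ∨ base + cs.length ≤ x.val →
          (G.foldl (fun st g => g st) s) x = s x) ∧
        (G.foldl (fun st g => g st) s) last =
          cs.foldr (fun c b => s c && b) (s acc) := by
  induction cs generalizing acc base with
  | nil =>
    exact ⟨[], acc, rfl, by omega, by simp, fun _ => rfl, by simp,
      fun s hs => ⟨fun x _ => rfl, rfl⟩⟩
  | cons c cs ih =>
    have hbw : base < w := by simp at hw; omega
    set t : Fin w := ⟨base, hbw⟩ with ht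
    obtain ⟨G', last, hlen, hlast, hlast1, hlast0, hvalid, hG'⟩ :=
      ih t (base + 1) (by omega) (by simp at hw ⊢; omega) (by simp [ht])
        (fun c' hc' => ⟨(hcs c' (by simp [hc'])).1, by
          intro h; have := (hcs c' (by simp [hc'])).1; rw [h] at this; simp [ht] at this; omega⟩)
    have hact : acc ≠ t := by intro h; rw [h] at hacc; simp [ht] at hacc
    have hct : c ≠ t := by
      intro h; have := (hcs c (by simp)).1; rw [h] at this; simp [ht] at this; omega
    have hlast' : base ≤ last.val := by
      by_cases hcs' : cs = []
      · rw [hlast0 hcs']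
      · have := hlast1 hcs'; omega
    refine ⟨toffoli2 acc c t :: G', last,
      by simp [hlen],
      by have := hlast; simp only [List.length_cons]; omega,
      fun _ => hlast', by simp, ?_, ?_⟩
    · intro g hg
      rcases List.mem_cons.mp hg with rfl | hg
      · refine ⟨acc, c, t, ?_, hact, hct, rfl⟩
        intro h; exact (hcs c (by simp)).2 h.symm
      · exact hvalid g hg
    · intro s hs
      set s1 := toffoli2 acc c t s with hs1
      have hs1t : s1 t = (s acc && s c) := by
        rw [hs1, toffoli2_apply_target, hs t (by simp [ht])]
        simp
      have hs1ne : ∀ x : Fin w, x ≠ t → s1 x = s x := fun x hx => toffoli2_apply_ne _ _ _ _ _ hx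
      have hs1f : ∀ b : Fin w, base + 1 ≤ b.val → s1 b = false := by
        intro b hb
        rw [hs1ne b (by intro h; rw [h] at hb; simp [ht] at hb)]
        exact hs b (by omega)
      obtain ⟨hunch, hval⟩ := hG' s1 hs1f
      have hfold : (toffoli2 acc c t :: G').foldl (fun st g => g st) s
          = G'.foldl (fun st g => g st) s1 := rfl
      constructor
      · intro x hx
        rw [hfold, hunch x (by simp only [List.length_cons] at hx ⊢; omega)]
        apply hs1ne
        intro h; rw [h] at hx; simp only [ht, Fin.val_mk, List.length_cons] at hx; omega
      · rw [hfold, hval, hs1t]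
        have : ∀ c' ∈ cs, s1 c' = s c' := by
          intro c' hc'
          apply hs1ne
          intro h; have := (hcs c' (by simp [hc'])).1; rw [h] at this; simp [ht] at this; omega
        rw [foldr_and_congr _ _ _ _ this, Bool.and_comm, foldr_and_init]
        rfl

lemma term_lemma {w n : ℕ} (js : List (Fin w)) (hlen3 : 3 ≤ js.length) (hnd : js.Nodup)
    (hjs : ∀ c ∈ js, c.val < n) (base : ℕ) (hn : n < base)
    (hw : base + (js.length - 2) ≤ w) :
    ∃ G : List ((Fin w → Bool) → (Fin w → Bool)),
      G.length = js.length - 1 ∧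
      (∀ g ∈ G, ∃ i j m : Fin w, i ≠ j ∧ i ≠ m ∧ j ≠ m ∧ g = toffoli2 i j m) ∧
      ∀ s : Fin w → Bool, (∀ b : Fin w, base ≤ b.val → s b = false) →
        (∀ x : Fin w, (x.val < base ∧ x.val ≠ n) ∨ base + (js.length - 2) ≤ x.val →
          (G.foldl (fun st g => g st) s) x = s x) ∧
        (G.foldl (fun st g => g st) s) ⟨n, by omega⟩ =
          xor (s ⟨n, by omega⟩) (js.foldr (fun c b => s c && b) true) := by
  rcases js with _ | ⟨a, _ | ⟨b, rest⟩⟩ <;> simp at hlen3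
  have hrest : rest ≠ [] := by
    intro h; subst h; simp at hlen3
  set lastC := rest.getLast hrest with hlastC
  set mid := rest.dropLast with hmid
  have hsplit : mid ++ [lastC] = rest := List.dropLast_append_getLast hrest
  have hmidlen : mid.length = rest.length - 1 := List.length_dropLast
  have hrlen : 1 ≤ rest.length := by
    rcases rest with _ | _
    · simp at hrest
    · simp
  have hmidsub : ∀ c ∈ mid, c ∈ rest := fun c hc => (List.dropLast_sublist rest).subset hc
  have hlastCmem : lastC ∈ rest := List.getLast_mem hrest
  have hjlen : (a :: b :: rest).length - 2 = rest.length := by simp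
  have hcslen : (b :: mid).length = rest.length := by simp [hmidlen]; omega
  have hanodup : a ∉ b :: rest := by
    have := hnd; rw [List.nodup_cons] at this; exact this.1
  obtain ⟨G1, last, hlen1, hlastlt, hlastge, -, hvalid1, hG1⟩ :=
    chain (n := n) (b :: mid) a base hn (by rw [hcslen]; omega)
      (by have := hjs a (by simp); omega)
      (by
        intro c hc
        rcases List.mem_cons.mp hc with rfl | hc
        · refine ⟨hjs c (by simp), ?_⟩
          intro h; exact hanodup (h ▸ List.mem_cons_self)
        · refine ⟨hjs c (by simp [hmidsub c hc]), ?_⟩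
          intro h; exact hanodup (h ▸ (by simp [hmidsub c hc] : c ∈ b :: rest)))
  have hlastge' : base ≤ last.val := hlastge (by simp)
  have hyw : n < w := by omega
  set y : Fin w := ⟨n, hyw⟩ with hy
  have hlastC_lt : lastC.val < n := hjs lastC (by simp [hlastCmem])
  have h1 : last ≠ lastC := by
    intro h; rw [h] at hlastge'; omega
  have h2 : last ≠ y := by
    intro h; rw [h] at hlastge'; simp [hy] at hlastge'; omega
  have h3 : lastC ≠ y := by
    intro h; rw [h] at hlastC_lt; simp [hy] at hlastC_lt
  refine ⟨G1 ++ [toffoli2 last lastC y], ?_, ?_, ?_⟩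
  · simp [hlen1, hcslen]
  · intro g hg
    rcases List.mem_append.mp hg with hg | hg
    · exact hvalid1 g hg
    · simp at hg
      exact ⟨last, lastC, y, h1, h2, h3, hg⟩
  · intro s hs
    obtain ⟨hunch1, hval1⟩ := hG1 s hs
    set s1 := G1.foldl (fun st g => g st) s with hs1
    have hfold : (G1 ++ [toffoli2 last lastC y]).foldl (fun st g => g st) s
        = toffoli2 last lastC y s1 := by
      rw [List.foldl_append]
      rfl
    constructor
    · intro x hx
      rw [hjlen] at hx
      have hxy : x ≠ y := by
        intro h; subst h; simp [hy] at hx; omega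
      rw [hfold, toffoli2_apply_ne _ _ _ _ _ hxy]
      apply hunch1
      rw [hcslen]; omega
    · rw [hfold]
      rw [toffoli2_apply_target]
      have e1 : s1 y = s y := hunch1 y (Or.inl (by simp [hy]; omega))
      have e2 : s1 lastC = s lastC := hunch1 lastC (Or.inl (by omega))
      have e3 : s1 last = (b :: mid).foldr (fun c b => s c && b) (s a) := hval1
      rw [e1, e2, e3]
      congr 1
      have hfull : (a :: b :: rest).foldr (fun c b => s c && b) true
          = (s a && (s b && (s lastC && mid.foldr (fun c b => s c && b) true))) := by
        rw [← hsplit]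
        simp only [List.foldr_cons, List.foldr_append, List.foldr_nil]
        rw [foldr_and_init]
      rw [hfull]
      simp only [List.foldr_cons]
      rw [show s a = (s a && true) from (Bool.and_true _).symm, foldr_and_init]
      simp [Bool.and_assoc, Bool.and_comm, Bool.and_left_comm]

lemma terms_lemma {n w : ℕ} (hnw : n < w) (ts : List (Finset (Fin n)))
    (hts : ∀ Tt ∈ ts, 2 < Tt.card) (base : ℕ) (hn : n < base)
    (hw : base + (ts.map (fun Tt => Tt.card - 2)).sum ≤ w) :
    ∃ G : List ((Fin w → Bool) → (Fin w → Bool)),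
      G.length = (ts.map (fun Tt => Tt.card - 1)).sum ∧
      (∀ g ∈ G, ∃ i j m : Fin w, i ≠ j ∧ i ≠ m ∧ j ≠ m ∧ g = toffoli2 i j m) ∧
      ∀ s : Fin w → Bool, (∀ b : Fin w, base ≤ b.val → s b = false) →
        (∀ x : Fin w,
          (x.val < base ∧ x.val ≠ n) ∨ base + (ts.map (fun Tt => Tt.card - 2)).sum ≤ x.val →
          (G.foldl (fun st g => g st) s) x = s x) ∧
        (G.foldl (fun st g => g st) s) ⟨n, hnw⟩ =
          xor (s ⟨n, hnw⟩)
            ((ts.map (fun Tt =>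
              Tt.toList.foldr (fun c b => s (Fin.castLE (le_of_lt hnw) c) && b) true)).foldr
              xor false) := by
  induction ts generalizing base with
  | nil =>
    refine ⟨[], by simp, by simp, fun s hs => ⟨fun x _ => rfl, by simp⟩⟩
  | cons Tt ts ih =>
    have hm : 2 < Tt.card := hts Tt (by simp)
    set js : List (Fin w) := Tt.toList.map (Fin.castLE (le_of_lt hnw)) with hjs
    have hjslen : js.length = Tt.card := by simp [hjs]
    have hnd : js.Nodup := (Finset.nodup_toList Tt).map (Fin.castLE_injective _)
    have hjsval : ∀ c ∈ js, c.val < n := by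
      intro c hc
      rw [hjs, List.mem_map] at hc
      obtain ⟨j, -, rfl⟩ := hc
      exact j.isLt
    obtain ⟨G1, hG1len, hG1valid, hG1⟩ :=
      term_lemma js (by omega) hnd hjsval base hn
        (by simp only [List.map_cons, List.sum_cons] at hw; omega)
    obtain ⟨G2, hG2len, hG2valid, hG2⟩ :=
      ih (fun Tt' h => hts Tt' (by simp [h])) (base + (Tt.card - 2))
        (by omega)
        (by simp only [List.map_cons, List.sum_cons] at hw; omega)
    refine ⟨G1 ++ G2, ?_, ?_, ?_⟩
    · simp [hG1len, hG2len, hjslen]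
    · intro g hg
      rcases List.mem_append.mp hg with hg | hg
      · exact hG1valid g hg
      · exact hG2valid g hg
    · intro s hs
      obtain ⟨hunch1, hval1⟩ := hG1 s hs
      set s1 := G1.foldl (fun st g => g st) s with hs1
      have hs1f : ∀ b : Fin w, base + (Tt.card - 2) ≤ b.val → s1 b = false := by
        intro b hb
        rw [hunch1 b (Or.inr (by omega))]
        exact hs b (by omega)
      obtain ⟨hunch2, hval2⟩ := hG2 s1 hs1f
      have hfold : ((G1 ++ G2).foldl (fun st g => g st) s)
          = G2.foldl (fun st g => g st) s1 := by rw [List.foldl_append]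
      constructor
      · intro x hx
        simp only [List.map_cons, List.sum_cons] at hx
        rw [hfold, hunch2 x (by rcases hx with ⟨h1, h2⟩ | h; exact Or.inl ⟨by omega, h2⟩; exact Or.inr (by omega))]
        apply hunch1
        rcases hx with ⟨h1, h2⟩ | h
        · exact Or.inl ⟨h1, h2⟩
        · exact Or.inr (by omega)
      · rw [hfold, hval2]
        have e1 : s1 ⟨n, hnw⟩ = xor (s ⟨n, hnw⟩) (js.foldr (fun c b => s c && b) true) := by
          rw [hs1]
          exact hval1
        have e2 : ∀ Tt' ∈ ts,
            Tt'.toList.foldr (fun c b => s1 (Fin.castLE (le_of_lt hnw) c) && b) true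
            = Tt'.toList.foldr (fun c b => s (Fin.castLE (le_of_lt hnw) c) && b) true := by
          intro Tt' hTt'
          apply foldr_and_congr
          intro c hc
          exact hunch1 _ (Or.inl ⟨by simpa using c.isLt.trans hn, by simpa using c.isLt.ne⟩)
        have e3 : ts.map (fun Tt' =>
              Tt'.toList.foldr (fun c b => s1 (Fin.castLE (le_of_lt hnw) c) && b) true)
            = ts.map (fun Tt' =>
              Tt'.toList.foldr (fun c b => s (Fin.castLE (le_of_lt hnw) c) && b) true) :=
          List.map_congr_left e2
        rw [e3, e1]
        simp only [List.map_cons, List.foldr_cons]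
        rw [Bool.xor_assoc]
        congr 2
        rw [hjs, List.foldr_map]

/-- Upper bound on the Reed-Muller Form I: a Boolean function given as the EXOR of
`k > 1` products of positive literals `T₁, …, T_k`, each with more than 2 variables,
is realized on wires `Fin (n+1+A)` (inputs `0,…,n-1`, output `n`, ancillas the rest)
by at most `Σᵢ (2^(nᵢ-2) + 1)` two-control Toffoli gates: on every state whose
ancilla coordinates are all `false`, the composition leaves the inputs unchanged and
XORs the output with `⨁ᵢ ∏_{j ∈ Tᵢ} xⱼ`. -/
theorem reed_muller_upper_bound (n k : ℕ) (hk : 1 < k)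
    (T : Fin k → Finset (Fin n)) (hT : ∀ i, 2 < (T i).card) :
    ∃ (A : ℕ) (L : List ((Fin (n + 1 + A) → Bool) → (Fin (n + 1 + A) → Bool))),
      L.length ≤ ∑ i : Fin k, (2 ^ ((T i).card - 2) + 1) ∧
      (∀ g ∈ L, ∃ i j m : Fin (n + 1 + A),
        i ≠ j ∧ i ≠ m ∧ j ≠ m ∧ g = toffoli2 i j m) ∧
      ∀ s : Fin (n + 1 + A) → Bool,
        (∀ a : Fin (n + 1 + A), n < a.val → s a = false) →
        (∀ c : Fin (n + 1 + A), c.val < n →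
          (L.foldl (fun st g => g st) s) c = s c) ∧
        (L.foldl (fun st g => g st) s) ⟨n, by omega⟩ =
          xor (s ⟨n, by omega⟩)
            ((List.ofFn fun i : Fin k =>
                (T i).inf fun j => s (Fin.castLE (by omega) j)).foldr xor false) := by
  set A : ℕ := ∑ i : Fin k, ((T i).card - 2) with hA
  have hnw : n < n + 1 + A := by omega
  have hsum2 : ((List.ofFn T).map (fun Tt => Tt.card - 2)).sum = A := by
    rw [List.map_ofFn, List.sum_ofFn]; rfl
  obtain ⟨G, hGlen, hGvalid, hG⟩ :=
    terms_lemma hnw (List.ofFn T)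
      (by intro Tt hTt; rw [List.mem_ofFn] at hTt; obtain ⟨i, rfl⟩ := hTt; exact hT i)
      (n + 1) (by omega) (by rw [hsum2])
  refine ⟨A, G, ?_, hGvalid, ?_⟩
  · rw [hGlen, List.map_ofFn, List.sum_ofFn]
    apply Finset.sum_le_sum
    intro i _
    have h3 : 2 < (T i).card := hT i
    have := @Nat.lt_two_pow_self ((T i).card - 2)
    simp only [Function.comp]
    omega
  · intro s hs
    obtain ⟨hunch, hval⟩ := hG s (fun b hb => hs b (by omega))
    refine ⟨fun c hc => hunch c (Or.inl ⟨by omega, by omega⟩), ?_⟩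
    rw [show (⟨n, by omega⟩ : Fin (n + 1 + A)) = ⟨n, hnw⟩ from rfl, hval]
    congr 1
    rw [List.map_ofFn]
    have heq : ((fun Tt : Finset (Fin n) =>
          Tt.toList.foldr (fun c b => s (Fin.castLE (le_of_lt hnw) c) && b) true) ∘ T)
        = fun i => (T i).inf fun j => s (Fin.castLE (le_of_lt hnw) j) := by
      funext i
      simp only [Function.comp]
      rw [inf_eq_foldr]
    rw [heq]
end
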